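/- Let m ≥ 1, n ≥ 3 be integers and let p satisfy p_crit(m,n) < p < p_conf(m,n). Then there exists γ > 0 with 1/(p(p+1)) < γ and γ < ((m+2)n - 2)/(2(m+2)) - ((m+2)n - m)/((m+2)(p+1)); moreover any such γ satisfies p·γ > 1/(p+1). -/

import Mathlib

/-- For `p_crit(m,n) < p < p_conf(m,n)` there exists `γ > 0` with
`1/(p(p+1)) < γ < ((m+2)n-2)/(2(m+2)) - ((m+2)n-m)/((m+2)(p+1))`, and every such `γ`
satisfies `p·γ > 1/(p+1)`. -/
theorem stmt_4 (m n : ℕ) (hm : 1 ≤ m) (hn : 3 ≤ n) (pc p : ℝ) (hpc : 0 < pc)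
    (hroot : (((m : ℝ) + 2) * (n : ℝ) / 2 - 1) * pc ^ 2
        + (((m : ℝ) + 2) * (1 - (n : ℝ) / 2) - 3) * pc - ((m : ℝ) + 2) = 0)
    (hp₁ : pc < p)
    (hp₂ : p < (((m : ℝ) + 2) * (n : ℝ) + 6) / (((m : ℝ) + 2) * (n : ℝ) - 2)) :
    (∃ γ : ℝ, 0 < γ ∧ 1 / (p * (p + 1)) < γ ∧
        γ < (((m : ℝ) + 2) * (n : ℝ) - 2) / (2 * ((m : ℝ) + 2))
              - (((m : ℝ) + 2) * (n : ℝ) - (m : ℝ)) / (((m : ℝ) + 2) * (p + 1))) ∧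
    (∀ γ : ℝ, 1 / (p * (p + 1)) < γ →
        γ < (((m : ℝ) + 2) * (n : ℝ) - 2) / (2 * ((m : ℝ) + 2))
              - (((m : ℝ) + 2) * (n : ℝ) - (m : ℝ)) / (((m : ℝ) + 2) * (p + 1)) →
        p * γ > 1 / (p + 1)) := by
  set M : ℝ := (m : ℝ) + 2 with hMdef
  clear_value M
  have hM : (3 : ℝ) ≤ M := by
    have : (1 : ℝ) ≤ (m : ℝ) := by exact_mod_cast hm
    simp [hMdef]; linarith
  have hN : (3 : ℝ) ≤ (n : ℝ) := by exact_mod_cast hn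
  have hp : 0 < p := lt_trans hpc hp₁
  have hp1 : 0 < p + 1 := by linarith
  have hA : 0 < M * (n : ℝ) / 2 - 1 := by nlinarith
  -- from the root equation: the "bracket" at pc is positive
  have hbr : 0 < (M * (n : ℝ) / 2 - 1) * pc + (M * (1 - (n : ℝ) / 2) - 3) := by
    nlinarith [mul_pos hpc hpc, hM]
  -- the quadratic is positive at p
  have hg : 0 < (M * (n : ℝ) / 2 - 1) * p ^ 2 + (M * (1 - (n : ℝ) / 2) - 3) * p - M := by
    nlinarith [mul_pos (sub_pos.mpr hp₁) hp, mul_pos (sub_pos.mpr hp₁) hA,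
      mul_pos hA hp]
  -- key inequality: 1/(p(p+1)) < B
  have hlt : 1 / (p * (p + 1)) <
      (M * (n : ℝ) - 2) / (2 * M) - (M * (n : ℝ) - (m : ℝ)) / (M * (p + 1)) := by
    rw [div_lt_iff₀ (by positivity)]
    have hm' : (m : ℝ) = M - 2 := by simp [hMdef]
    rw [hm']
    have hM0 : (0 : ℝ) < M := by linarith
    field_simp
    nlinarith [mul_pos hM0 (mul_pos hp1 hg)]
  constructor
  · refine ⟨(1 / (p * (p + 1)) + ((M * (n : ℝ) - 2) / (2 * M)
      - (M * (n : ℝ) - (m : ℝ)) / (M * (p + 1)))) / 2, ?_, by linarith, by linarith⟩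
    have h0 : 0 < 1 / (p * (p + 1)) := by positivity
    linarith
  · intro γ h1 _
    have : 1 / (p + 1) = p * (1 / (p * (p + 1))) := by field_simp
    rw [gt_iff_lt, this]
    exact mul_lt_mul_of_pos_left h1 hp
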